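/- For every integer a ≥ 0: if r is odd then ω_a = ε(a) + δ^{-1}·ϱ·Q_a·P + ∑_{k=0}^{a−1} ε(k)·Q_{a−1−k} − δ^{-1}·ϱ·[a = 0], and if r is even then ω_a = ε(a) + δ^{-1}·ϱ·Q_a·P − ∑_{k=0}^{a} ε(k)·Q_{a−k} − δ^{-1}·ϱ·[a = 0]. Here ε(k) := 1 if k is even and ε(k) := 0 if k is odd, P := u_1⋯u_r, and [a = 0] is 1 if a = 0 and 0 otherwise. -/

import Mathlib

open Polynomial Finset

namespace St5

variable {R : Type*} [CommRing R] {r : ℕ}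

def gg (r : ℕ) (x : R) : R := if Odd r then 1 else -x

def S1 (u : Fin r → R) (j : Fin r) : R := ∏ i ∈ Finset.univ.erase j, (u j * u i - 1)

def Dl (u : Fin r → R) (j : Fin r) : R := ∏ i ∈ Finset.univ.erase j, (u j - u i)

def S3 (u : Fin r → R) (j : Fin r) : R := ∏ i ∈ Finset.univ.erase j, u i

def Nj (u : Fin r → R) (c : R) (j : Fin r) : R :=
  (gg r (u j) + c * (u j ^ 2 - 1) * S3 u j) * S1 u j

noncomputable def Ap (u : Fin r → R) : R[X] := ∏ i, (X - C (u i))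

noncomputable def Bp (u : Fin r → R) : R[X] := ∏ i, (C (u i) * X - 1)

noncomputable def Gp (u : Fin r → R) : R[X] := if Odd r then X * Ap u else -Ap u

noncomputable def Rp (u : Fin r → R) (c : R) : R[X] :=
  Bp u + C c * (C (∏ l, u l) * Ap u - Bp u) * (1 - X ^ 2) + Gp u

noncomputable def Ep (u : Fin r → R) (j : Fin r) : R[X] :=
  ∏ i ∈ Finset.univ.erase j, (C (u i) * X - 1)

noncomputable def Lp (u : Fin r → R) (c : R) : R[X] :=
  (∑ j, C (Nj u c j * ∏ j' ∈ Finset.univ.erase j, Dl u j') * Ep u j) * (1 - X ^ 2)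

noncomputable def Tp (u : Fin r → R) (c : R) : R[X] := Tp' where
  Tp' := Lp u c + C (∏ j, Dl u j) * Rp u c

lemma Tp_def (u : Fin r → R) (c : R) :
    Tp u c = Lp u c + C (∏ j, Dl u j) * Rp u c := rfl

lemma eval_Tp (u : Fin r → R) (c x : R) :
    eval x (Tp u c) =
      (∑ j, (Nj u c j * ∏ j' ∈ Finset.univ.erase j, Dl u j') *
          ∏ i ∈ Finset.univ.erase j, (u i * x - 1)) * (1 - x ^ 2) +
        (∏ j, Dl u j) *
          ((∏ i, (u i * x - 1)) +
            c * ((∏ l, u l) * ∏ i, (x - u i) - ∏ i, (u i * x - 1)) * (1 - x ^ 2) +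
            (if Odd r then x * ∏ i, (x - u i) else -∏ i, (x - u i))) := by
  simp [Tp_def, Lp, Rp, Ep, Ap, Bp, Gp, eval_prod, eval_finset_sum, apply_ite (eval x)]


lemma prod_one_sub (u : Fin r → R) :
    (∏ i, ((1 : R) - u i)) = (-1) ^ r * ∏ i, (u i - 1) := by
  have : ∀ i : Fin r, (1 : R) - u i = (-1) * (u i - 1) := fun i => by ring
  simp only [this, Finset.prod_mul_distrib, Finset.prod_const, Finset.card_univ,
    Fintype.card_fin]

lemma eval_one_Tp (u : Fin r → R) (c : R) : eval 1 (Tp u c) = 0 := by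
  rw [eval_Tp]
  have h1 : (1 : R) - 1 ^ 2 = 0 := by ring
  rw [h1, mul_zero, mul_zero, zero_add, add_zero]
  have h2 : ∀ i : Fin r, u i * 1 - 1 = u i - 1 := fun i => by ring
  simp only [h2]
  rcases Nat.even_or_odd r with hre | hro
  · rw [if_neg (Nat.not_odd_iff_even.mpr hre)]
    rw [prod_one_sub, hre.neg_one_pow, one_mul]
    ring
  · rw [if_pos hro, one_mul, prod_one_sub, hro.neg_one_pow]
    ring

lemma eval_neg_one_Tp (u : Fin r → R) (c : R) : eval (-1) (Tp u c) = 0 := by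
  rw [eval_Tp]
  have h1 : (1 : R) - (-1) ^ 2 = 0 := by ring
  rw [h1, mul_zero, mul_zero, zero_add, add_zero]
  have h2 : ∀ i : Fin r, u i * (-1) - 1 = -1 - u i := fun i => by ring
  simp only [h2]
  split
  · ring
  · ring


lemma eval_inv_Tp {K : Type*} [Field K] {r : ℕ} (u : Fin r → K) (c : K)
    (hu0 : ∀ i, u i ≠ 0) (j : Fin r) : eval (u j)⁻¹ (Tp u c) = 0 := by
  classical
  set x : K := (u j)⁻¹ with hxdef
  have hx : u j * x = 1 := mul_inv_cancel₀ (hu0 j)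
  rw [eval_Tp]
  have hzero : ∀ j' : Fin r, j' ≠ j → (∏ i ∈ Finset.univ.erase j', (u i * x - 1)) = 0 :=
    fun j' hj' => Finset.prod_eq_zero
      (Finset.mem_erase.mpr ⟨Ne.symm hj', Finset.mem_univ j⟩)
      (show u j * x - 1 = 0 by rw [hx]; ring)
  rw [Finset.sum_eq_single j (fun j' _ hj' => by rw [hzero j' hj', mul_zero])
    (fun h => absurd (Finset.mem_univ j) h)]
  have hBz : (∏ i, (u i * x - 1)) = 0 :=
    Finset.prod_eq_zero (Finset.mem_univ j) (show u j * x - 1 = 0 by rw [hx]; ring)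
  rw [hBz]
  have hE : (∏ i ∈ Finset.univ.erase j, (u i * x - 1)) = (-x) ^ (r - 1) * Dl u j := by
    rw [show (∏ i ∈ Finset.univ.erase j, (u i * x - 1)) =
        ∏ i ∈ Finset.univ.erase j, (-x) * (u j - u i) from
      Finset.prod_congr rfl (fun i _ => by linear_combination hx)]
    rw [Finset.prod_mul_distrib, Finset.prod_const,
      Finset.card_erase_of_mem (Finset.mem_univ j), Finset.card_univ, Fintype.card_fin, Dl]
  have hA : (∏ i, (x - u i)) = (x - u j) * ((-x) ^ (r - 1) * S1 u j) := by
    rw [← Finset.mul_prod_erase _ _ (Finset.mem_univ j)]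
    congr 1
    rw [show (∏ i ∈ Finset.univ.erase j, (x - u i)) =
        ∏ i ∈ Finset.univ.erase j, (-x) * (u j * u i - 1) from
      Finset.prod_congr rfl (fun i _ => by linear_combination (u i) * hx)]
    rw [Finset.prod_mul_distrib, Finset.prod_const,
      Finset.card_erase_of_mem (Finset.mem_univ j), Finset.card_univ, Fintype.card_fin, S1]
  have hP : (∏ l, u l) = u j * S3 u j := (Finset.mul_prod_erase _ _ (Finset.mem_univ j)).symm
  have hDelta : (∏ j' : Fin r, Dl u j') = Dl u j * ∏ j' ∈ Finset.univ.erase j, Dl u j' :=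
    (Finset.mul_prod_erase _ _ (Finset.mem_univ j)).symm
  rw [hE, hA, hP, hDelta, Nj]
  have hbr : (gg r (u j) + c * (u j ^ 2 - 1) * S3 u j) * (1 - x ^ 2) +
      c * (u j * S3 u j) * (x - u j) * (1 - x ^ 2) +
      (if Odd r then x * (x - u j) else -(x - u j)) = 0 := by
    rw [gg]
    split
    · linear_combination (c * S3 u j - c * S3 u j * x ^ 2 - 1) * hx
    · linear_combination (x + c * S3 u j - c * S3 u j * x ^ 2) * hx
  split at hbr <;> rename_i hodd
  · rw [if_pos hodd]
    linear_combination ((-x) ^ (r - 1) * S1 u j * Dl u j *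
      (∏ j' ∈ Finset.univ.erase j, Dl u j')) * hbr
  · rw [if_neg hodd]
    linear_combination ((-x) ^ (r - 1) * S1 u j * Dl u j *
      (∏ j' ∈ Finset.univ.erase j, Dl u j')) * hbr


lemma natDegree_linear_le {a b : R} : (C a * X - C b).natDegree ≤ 1 := by
  apply le_trans (natDegree_sub_le _ _)
  rw [max_le_iff]
  exact ⟨le_trans natDegree_mul_le (by simpa using natDegree_X_le), by simp⟩

lemma natDegree_factor_le {a : R} : (C a * X - 1).natDegree ≤ 1 := by
  have : (C a * X - 1 : R[X]) = C a * X - C 1 := by rw [map_one]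
  rw [this]; exact natDegree_linear_le

lemma natDegree_Ep_le (u : Fin r → R) (j : Fin r) : (Ep u j).natDegree ≤ r - 1 := by
  apply le_trans (natDegree_prod_le _ _)
  apply le_trans (Finset.sum_le_sum (fun i _ => natDegree_factor_le (a := u i)))
  simp [Finset.card_erase_of_mem, Finset.card_univ]

lemma natDegree_one_sub_X_sq : ((1 : R[X]) - X ^ 2).natDegree ≤ 2 := by
  apply le_trans (natDegree_sub_le _ _)
  rw [max_le_iff]
  refine ⟨by simp, le_trans natDegree_pow_le ?_⟩
  have := natDegree_X_le (R := R)
  omega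

lemma monic_Ap (u : Fin r → R) : (Ap u).Monic :=
  monic_prod_of_monic _ _ (fun i _ => monic_X_sub_C (u i))

lemma natDegree_Ap (u : Fin r → R) [Nontrivial R] : (Ap u).natDegree = r := by
  rw [Ap, natDegree_prod_of_monic _ _ (fun i _ => monic_X_sub_C (u i))]
  simp [natDegree_X_sub_C, Finset.card_univ]

lemma natDegree_Bp_le (u : Fin r → R) : (Bp u).natDegree ≤ r := by
  apply le_trans (natDegree_prod_le _ _)
  apply le_trans (Finset.sum_le_sum (fun i _ => natDegree_factor_le (a := u i)))
  simp [Finset.card_univ]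

lemma Bp_eq {K : Type*} [Field K] {r : ℕ} (u : Fin r → K) (hu0 : ∀ i, u i ≠ 0) :
    Bp u = C (∏ l, u l) * ∏ i, (X - C (u i)⁻¹) := by
  rw [Bp, map_prod, ← Finset.prod_mul_distrib]
  apply Finset.prod_congr rfl
  intro i _
  rw [mul_sub, ← C_mul, mul_inv_cancel₀ (hu0 i), map_one]

theorem key1 {K : Type*} [Field K] {r : ℕ} (hr : 1 ≤ r) (u : Fin r → K) (c : K)
    (h12 : (1 : K) ≠ -1) (hu0 : ∀ i, u i ≠ 0) (huinj : Function.Injective u)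
    (hu1 : ∀ i j, u i * u j ≠ 1) : Tp u c = 0 := by
  classical
  have hP0 : (∏ l, u l) ≠ 0 := Finset.prod_ne_zero_iff.mpr (fun i _ => hu0 i)
  -- degree bound
  have hmid : (C (∏ l, u l) * Ap u - Bp u).natDegree ≤ r - 1 := by
    by_cases h0 : C (∏ l, u l) * Ap u - Bp u = 0
    · rw [h0]
      simp
    have hApm := monic_Ap u
    have hdegA : (C (∏ l, u l) * Ap u).degree = (r : ℕ) := by
      rw [degree_C_mul hP0, degree_eq_natDegree hApm.ne_zero, natDegree_Ap]
    have hdegB : (Bp u).degree = (r : ℕ) := by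
      rw [Bp_eq u hu0, degree_C_mul hP0,
        degree_eq_natDegree (monic_prod_of_monic _ _
          (fun i _ => monic_X_sub_C ((u i)⁻¹))).ne_zero,
        natDegree_prod_of_monic _ _ (fun i _ => monic_X_sub_C ((u i)⁻¹))]
      simp [natDegree_X_sub_C, Finset.card_univ]
    have hlt : (C (∏ l, u l) * Ap u - Bp u).degree < (r : ℕ) := by
      rw [← hdegA]
      apply degree_sub_lt (hdegA.trans hdegB.symm)
        (mul_ne_zero (C_ne_zero.mpr hP0) hApm.ne_zero)
      rw [leadingCoeff_mul, leadingCoeff_C, hApm.leadingCoeff, mul_one,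
        Bp_eq u hu0, leadingCoeff_mul, leadingCoeff_C,
        (monic_prod_of_monic _ _ (fun i _ => monic_X_sub_C ((u i)⁻¹))).leadingCoeff, mul_one]
    have := (natDegree_lt_iff_degree_lt h0).mpr hlt
    omega
  have hdegT : (Tp u c).natDegree ≤ r + 1 := by
    rw [Tp_def]
    apply le_trans (natDegree_add_le _ _)
    rw [max_le_iff]
    constructor
    · rw [Lp]
      apply le_trans (natDegree_mul_le)
      have h1 : (∑ j, C (Nj u c j * ∏ j' ∈ Finset.univ.erase j, Dl u j') *
          Ep u j).natDegree ≤ r - 1 :=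
        natDegree_sum_le_of_forall_le _ _ (fun j _ => le_trans natDegree_mul_le
          (by rw [natDegree_C]; simpa using natDegree_Ep_le u j))
      have := natDegree_one_sub_X_sq (R := K)
      omega
    · apply le_trans (natDegree_C_mul_le _ _)
      rw [Rp]
      apply le_trans (natDegree_add_le _ _)
      rw [max_le_iff]
      constructor
      · apply le_trans (natDegree_add_le _ _)
        rw [max_le_iff]
        refine ⟨le_trans (natDegree_Bp_le u) (by omega), ?_⟩
        apply le_trans (natDegree_mul_le)
        have h2 : (C c * (C (∏ l, u l) * Ap u - Bp u)).natDegree ≤ r - 1 :=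
          le_trans (natDegree_C_mul_le _ _) hmid
        have := natDegree_one_sub_X_sq (R := K)
        omega
      · rw [Gp]
        split
        · apply le_trans (natDegree_mul_le)
          rw [natDegree_X, natDegree_Ap]
          omega
        · simp [natDegree_Ap]
  -- the point set
  set s : Finset K := insert 1 (insert (-1) (Finset.univ.image fun j => (u j)⁻¹)) with hs
  have hinv_inj : Function.Injective (fun j => (u j)⁻¹) :=
    fun a b h => huinj (inv_injective h)
  have hninv1 : ∀ j : Fin r, (u j)⁻¹ ≠ 1 := by
    intro j h
    exact hu1 j j (by rw [inv_eq_one.mp h]; ring)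
  have hninvm1 : ∀ j : Fin r, (u j)⁻¹ ≠ -1 := by
    intro j h
    have : u j = -1 := by
      have := congrArg (·⁻¹) h
      simpa [inv_neg] using this
    exact hu1 j j (by rw [this]; ring)
  have hcard : s.card = r + 2 := by
    rw [hs, Finset.card_insert_of_notMem, Finset.card_insert_of_notMem,
      Finset.card_image_of_injective _ hinv_inj, Finset.card_univ, Fintype.card_fin]
    · simp only [Finset.mem_image, Finset.mem_univ, true_and, not_exists]
      intro j
      exact hninvm1 j
    · simp only [Finset.mem_insert, Finset.mem_image, Finset.mem_univ, true_and, not_or,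
        not_exists]
      exact ⟨h12, fun j h => hninv1 j h⟩
  apply eq_zero_of_natDegree_lt_card_of_eval_eq_zero' (Tp u c) s
  · intro y hy
    rw [hs] at hy
    simp only [Finset.mem_insert, Finset.mem_image, Finset.mem_univ, true_and] at hy
    rcases hy with rfl | rfl | ⟨j, rfl⟩
    · exact eval_one_Tp u c
    · exact eval_neg_one_Tp u c
    · exact eval_inv_Tp u c hu0 j
  · rw [hcard]
    omega


lemma ringHom_Nj {S : Type*} [CommRing S] (f : R →+* S) (u : Fin r → R) (c : R) (j : Fin r) :
    f (Nj u c j) = Nj (fun i => f (u i)) (f c) j := by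
  simp [Nj, gg, S1, S3, map_prod, map_sum, apply_ite f]

lemma map_Nj_poly {S : Type*} [CommRing S] (f : R →+* S) (u : Fin r → R) (c : R) (j : Fin r) :
    Polynomial.map f (Nj (fun i => C (u i)) (C c) j) =
      Nj (fun i => C (f (u i))) (C (f c)) j := by
  have := ringHom_Nj (Polynomial.mapRingHom f) (fun i => C (u i)) (C c) j
  simpa [Polynomial.coe_mapRingHom, Polynomial.map_C] using this

lemma map_Tp {S : Type*} [CommRing S] (f : R →+* S) (u : Fin r → R) (c : R) :
    (Tp u c).map f = Tp (fun i => f (u i)) (f c) := by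
  simp only [Tp_def, Lp, Rp, Ep, Ap, Bp, Gp, Dl, Polynomial.map_add, Polynomial.map_mul,
    Polynomial.map_sub, Polynomial.map_pow, Polynomial.map_one, Polynomial.map_sum,
    Polynomial.map_prod, Polynomial.map_C, Polynomial.map_X, map_prod, map_mul, map_sub,
    ringHom_Nj, map_Nj_poly, apply_ite (Polynomial.map f), Polynomial.map_neg]

theorem key2 {R : Type*} [CommRing R] {r : ℕ} (hr : 1 ≤ r) (u : Fin r → R) (c : R) :
    Tp u c = 0 := by
  classical
  set K := FractionRing (MvPolynomial (Option (Fin r)) ℚ) with hK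
  set ψ : MvPolynomial (Option (Fin r)) ℤ →+* K :=
    (algebraMap (MvPolynomial (Option (Fin r)) ℚ) K).comp
      (MvPolynomial.map (Int.castRingHom ℚ)) with hψdef
  have hψ : Function.Injective ψ :=
    (IsFractionRing.injective (MvPolynomial (Option (Fin r)) ℚ) K).comp
      (MvPolynomial.map_injective _ Int.cast_injective)
  set U : Fin r → MvPolynomial (Option (Fin r)) ℤ := fun i => MvPolynomial.X (some i) with hU
  -- the generic identity over K
  have hgenK : Tp (fun i => ψ (U i)) (ψ (MvPolynomial.X none)) = 0 := by
    apply key1 hr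
    · -- 1 ≠ -1
      haveI : CharZero K := charZero_of_injective_algebraMap
        (IsFractionRing.injective (MvPolynomial (Option (Fin r)) ℚ) K)
      intro h
      have : (2 : K) = 0 := by linear_combination h
      exact two_ne_zero this
    · intro i h
      exact MvPolynomial.X_ne_zero (σ := Option (Fin r)) (R := ℤ) (some i)
        (hψ (h.trans (map_zero ψ).symm))
    · intro a b h
      have := MvPolynomial.X_injective (hψ h)
      exact Option.some_injective _ this
    · intro a b h
      have : (MvPolynomial.X (some a) * MvPolynomial.X (some b) :
          MvPolynomial (Option (Fin r)) ℤ) = 1 := hψ (by rw [map_mul, map_one]; exact h)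
      have h0 := congrArg MvPolynomial.constantCoeff this
      simp [MvPolynomial.constantCoeff_X] at h0
  have hgen : Tp U (MvPolynomial.X none) = 0 := by
    have hmap := map_Tp ψ U (MvPolynomial.X none)
    apply Polynomial.map_injective ψ hψ
    rw [hmap, hgenK, Polynomial.map_zero]
  -- transfer to R
  set e : MvPolynomial (Option (Fin r)) ℤ →+* R :=
    MvPolynomial.eval₂Hom (Int.castRingHom R) (fun s => Option.elim s c u) with he
  have : Tp u c = (Tp U (MvPolynomial.X none)).map e := by
    rw [map_Tp]
    congr 1
    · funext i
      simp [he, hU]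
    · simp [he]
  rw [this, hgen, Polynomial.map_zero]


theorem key3 {F : Type*} [Field F] {r : ℕ} (hr : 1 ≤ r) (u : Fin r → F) (c : F)
    (hu0 : ∀ i, u i ≠ 0) (huinj : Function.Injective u) (hu1 : ∀ i j, u i * u j ≠ 1)
    (γ : Fin r → F)
    (hγ : ∀ i, γ i =
      ((if Odd r then 1 else -u i) + c * (u i ^ 2 - 1) * ∏ j ∈ Finset.univ.erase i, u j) *
        ∏ j ∈ Finset.univ.erase i, (u i * u j - 1) / (u i - u j)) :
    (∑ j, C (γ j) * Ep u j) * (1 - X ^ 2) + Rp u c = 0 := by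
  classical
  have hDl0 : ∀ j, Dl u j ≠ 0 := by
    intro j
    rw [Dl]
    apply Finset.prod_ne_zero_iff.mpr
    intro i hi
    exact sub_ne_zero.mpr (fun h => (Finset.mem_erase.mp hi).1 (huinj h).symm)
  have hDelta0 : (∏ j, Dl u j) ≠ 0 := Finset.prod_ne_zero_iff.mpr (fun j _ => hDl0 j)
  have hγDl : ∀ j, γ j * Dl u j = (gg r (u j) + c * (u j ^ 2 - 1) * S3 u j) * S1 u j := by
    intro j
    have hD : (∏ x ∈ Finset.univ.erase j, (u j - u x)) ≠ 0 := by
      simpa [Dl] using hDl0 j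
    rw [hγ j, Finset.prod_div_distrib, gg, S3, S1, Dl, mul_assoc, div_mul_cancel₀ _ hD]
  have hNj : ∀ j, Nj u c j * ∏ j' ∈ Finset.univ.erase j, Dl u j' =
      γ j * ∏ j', Dl u j' := by
    intro j
    rw [Nj, ← hγDl j, ← Finset.mul_prod_erase _ (fun j' => Dl u j') (Finset.mem_univ j)]
    ring
  have h2 := key2 hr u c
  rw [Tp_def, Lp] at h2
  have hC : ∀ j : Fin r, C (Nj u c j * ∏ j' ∈ Finset.univ.erase j, Dl u j') =
      C (∏ j' : Fin r, Dl u j') * C (γ j) := fun j => by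
    rw [← map_mul, hNj j, mul_comm]
  have h3 : C (∏ j, Dl u j) * ((∑ j, C (γ j) * Ep u j) * (1 - X ^ 2) + Rp u c) = 0 := by
    rw [← h2, mul_add, ← mul_assoc, Finset.mul_sum]
    congr 2
    apply Finset.sum_congr rfl
    intro j _
    rw [hC j]
    ring
  rcases mul_eq_zero.mp h3 with h | h
  · exact absurd h (C_ne_zero.mpr hDelta0)
  · exact h


lemma geom_inv (a : R) :
    ((1 : PowerSeries R) - PowerSeries.C (R := R) a * PowerSeries.X) *
      PowerSeries.mk (fun n => a ^ n) = 1 := by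
  ext n
  rw [PowerSeries.coeff_one, sub_mul, one_mul, map_sub, mul_assoc, PowerSeries.coeff_C_mul]
  cases n with
  | zero => simp
  | succ n =>
    rw [PowerSeries.coeff_succ_X_mul, PowerSeries.coeff_mk, PowerSeries.coeff_mk]
    simp [pow_succ, mul_comm]

lemma even_inv :
    ((1 : PowerSeries R) - PowerSeries.X ^ 2) *
      PowerSeries.mk (fun n => if Even n then (1 : R) else 0) = 1 := by
  ext n
  rw [PowerSeries.coeff_one, sub_mul, one_mul, map_sub]
  match n with
  | 0 => simp
  | 1 => simp [PowerSeries.coeff_X_pow_mul']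
  | (n + 2) =>
    rw [PowerSeries.coeff_X_pow_mul, PowerSeries.coeff_mk, PowerSeries.coeff_mk]
    have : Even (n + 2) ↔ Even n := by simp [parity_simps]
    simp [this]


theorem key4 {F : Type*} [Field F] {r : ℕ} (hr : 1 ≤ r) (u : Fin r → F) (c : F)
    (hu0 : ∀ i, u i ≠ 0) (huinj : Function.Injective u) (hu1 : ∀ i j, u i * u j ≠ 1)
    (γ : Fin r → F)
    (hγ : ∀ i, γ i =
      ((if Odd r then 1 else -u i) + c * (u i ^ 2 - 1) * ∏ j ∈ Finset.univ.erase i, u j) *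
        ∏ j ∈ Finset.univ.erase i, (u i * u j - 1) / (u i - u j)) :
    (∑ j, PowerSeries.C (R := F) (γ j) * PowerSeries.mk fun n => u j ^ n) =
      PowerSeries.mk (fun n => if Even n then (1 : F) else 0) +
      PowerSeries.C (R := F) c * (PowerSeries.C (R := F) (∏ l, u l) *
        (∏ i, (PowerSeries.X - PowerSeries.C (R := F) (u i)) *
          (PowerSeries.C (R := F) (u i) * PowerSeries.X - 1)⁻¹) - 1) +
      (if Odd r then
        PowerSeries.X * (PowerSeries.mk (fun n => if Even n then (1 : F) else 0) *
          ∏ i, (PowerSeries.X - PowerSeries.C (R := F) (u i)) *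
            (PowerSeries.C (R := F) (u i) * PowerSeries.X - 1)⁻¹)
       else
        -(PowerSeries.mk (fun n => if Even n then (1 : F) else 0) *
          ∏ i, (PowerSeries.X - PowerSeries.C (R := F) (u i)) *
            (PowerSeries.C (R := F) (u i) * PowerSeries.X - 1)⁻¹)) := by
  classical
  set E : PowerSeries F := PowerSeries.mk (fun n => if Even n then (1 : F) else 0) with hE
  set A' : PowerSeries F := ∏ i, (PowerSeries.X - PowerSeries.C (R := F) (u i)) with hA'
  set B' : PowerSeries F := ∏ i, (PowerSeries.C (R := F) (u i) * PowerSeries.X - 1) with hB'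
  set f : PowerSeries F := ∏ i, (PowerSeries.X - PowerSeries.C (R := F) (u i)) *
    (PowerSeries.C (R := F) (u i) * PowerSeries.X - 1)⁻¹ with hf
  -- map the polynomial identity into power series
  have h3 := key3 hr u c hu0 huinj hu1 γ hγ
  simp only [Rp, Bp, Ap, Gp, Ep] at h3
  set φ : Polynomial F →+* PowerSeries F := Polynomial.coeToPowerSeries.ringHom with hφ
  have hφC : ∀ a : F, φ (Polynomial.C a) = PowerSeries.C (R := F) a := fun a => by
    simp [hφ, Polynomial.coeToPowerSeries.ringHom_apply]
  have hφX : φ Polynomial.X = PowerSeries.X := by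
    simp [hφ, Polynomial.coeToPowerSeries.ringHom_apply]
  have h5 := congrArg φ h3
  simp only [map_add, map_mul, map_sub, map_sum, map_prod, map_pow, map_one, map_zero,
    map_neg, apply_ite φ, hφC, hφX] at h5
  rw [← hA', ← hB', ← map_prod (PowerSeries.C (R := F)) u Finset.univ] at h5
  -- basic power series facts
  have hBfac : ∀ i : Fin r,
      PowerSeries.constantCoeff (R := F) (PowerSeries.C (R := F) (u i) * PowerSeries.X - 1) ≠ 0 := by
    intro i
    simp
  have hfB : f * B' = A' := by
    rw [hf, hB', hA', ← Finset.prod_mul_distrib]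
    refine Finset.prod_congr rfl fun i _ => ?_
    rw [mul_assoc, PowerSeries.inv_mul_cancel _ (hBfac i), mul_one]
  have hD0 : B' * ((1 : PowerSeries F) - PowerSeries.X ^ 2) ≠ 0 := by
    intro h
    have h0 := congrArg (PowerSeries.constantCoeff (R := F)) h
    simp [hB', map_prod] at h0
  have hmkB : ∀ j : Fin r, (PowerSeries.mk fun n => u j ^ n) * B' =
      -∏ i ∈ Finset.univ.erase j, (PowerSeries.C (R := F) (u i) * PowerSeries.X - 1) := by
    intro j
    rw [hB', ← Finset.mul_prod_erase _ _ (Finset.mem_univ j),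
      show (PowerSeries.C (R := F) (u j) * PowerSeries.X - 1) =
        -(1 - PowerSeries.C (R := F) (u j) * PowerSeries.X) by ring,
      show ∀ z w v : PowerSeries F, z * (-w * v) = -((w * z) * v) from fun z w v => by ring,
      geom_inv (u j), one_mul]
  apply mul_right_cancel₀ hD0
  -- left side
  have hWD : (∑ j, PowerSeries.C (R := F) (γ j) * PowerSeries.mk fun n => u j ^ n) *
      (B' * (1 - PowerSeries.X ^ 2)) =
      -((∑ j, PowerSeries.C (R := F) (γ j) *
        ∏ i ∈ Finset.univ.erase j, (PowerSeries.C (R := F) (u i) * PowerSeries.X - 1)) *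
        (1 - PowerSeries.X ^ 2)) := by
    rw [Finset.sum_mul, Finset.sum_mul, ← Finset.sum_neg_distrib]
    refine Finset.sum_congr rfl fun j _ => ?_
    rw [show (PowerSeries.C (R := F) (γ j) * PowerSeries.mk fun n => u j ^ n) *
        (B' * (1 - PowerSeries.X ^ 2)) =
        PowerSeries.C (R := F) (γ j) * ((PowerSeries.mk fun n => u j ^ n) * B') *
          (1 - PowerSeries.X ^ 2) from by ring, hmkB j]
    ring
  rw [hWD]
  -- right side
  have hEB : E * (B' * (1 - PowerSeries.X ^ 2)) = B' := by
    rw [show E * (B' * (1 - PowerSeries.X ^ 2)) =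
      ((1 - PowerSeries.X ^ 2) * E) * B' from by ring, even_inv, one_mul]
  have hmidB : (PowerSeries.C (R := F) c * (PowerSeries.C (R := F) (∏ l, u l) * f - 1)) *
      (B' * (1 - PowerSeries.X ^ 2)) =
      PowerSeries.C (R := F) c * (PowerSeries.C (R := F) (∏ l, u l) * A' - B') *
        (1 - PowerSeries.X ^ 2) := by
    rw [show (PowerSeries.C (R := F) c * (PowerSeries.C (R := F) (∏ l, u l) * f - 1)) *
        (B' * (1 - PowerSeries.X ^ 2)) =
        PowerSeries.C (R := F) c * (PowerSeries.C (R := F) (∏ l, u l) * (f * B') - B') *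
          (1 - PowerSeries.X ^ 2) from by ring, hfB]
  split <;> rename_i hodd
  · rw [if_pos hodd] at h5
    rw [add_mul, add_mul, hEB, hmidB,
      show (PowerSeries.X * (E * f)) * (B' * (1 - PowerSeries.X ^ 2)) =
        PowerSeries.X * (((1 - PowerSeries.X ^ 2) * E) * (f * B')) from by ring,
      even_inv, hfB, one_mul]
    linear_combination -h5
  · rw [if_neg hodd] at h5
    rw [add_mul, add_mul, hEB, hmidB,
      show (-(E * f)) * (B' * (1 - PowerSeries.X ^ 2)) =
        -(((1 - PowerSeries.X ^ 2) * E) * (f * B')) from by ring,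
      even_inv, hfB, one_mul]
    linear_combination -h5

end St5

/-- With `ω_a = ∑_j u_j^a γ_j` and `Q_a` the coefficient of `y^a` in
`∏_i (y − u_i)/(u_i y − 1) ∈ F[[y]]`, for every integer `a ≥ 0`:
if `r` is odd then
`ω_a = ε(a) + δ⁻¹ϱ·Q_a·P + ∑_{k=0}^{a−1} ε(k)·Q_{a−1−k} − δ⁻¹ϱ·[a = 0]`,
and if `r` is even then
`ω_a = ε(a) + δ⁻¹ϱ·Q_a·P − ∑_{k=0}^{a} ε(k)·Q_{a−k} − δ⁻¹ϱ·[a = 0]`,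
where `ε(k) = 1` for even `k`, `ε(k) = 0` for odd `k`, and `P = u₁⋯u_r`. -/
theorem stmt_5 {F : Type*} [Field F] {r : ℕ} (hr : 1 ≤ r)
    (q ϱ α : F) (hq : q ≠ 0) (hδ : q - q⁻¹ ≠ 0) (hϱ : ϱ ≠ 0)
    (u : Fin r → F) (hu0 : ∀ i, u i ≠ 0) (huinj : Function.Injective u)
    (hu1 : ∀ i j, u i * u j ≠ 1)
    (hα : if Odd r then α = 1 ∨ α = -1 else α = q⁻¹ ∨ α = -q)
    (hϱα : ϱ⁻¹ = α * ∏ l, u l)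
    (γ : Fin r → F)
    (hγ : ∀ i, γ i =
      ((if Odd r then 1 else -u i) +
          (q - q⁻¹)⁻¹ * ϱ * (u i ^ 2 - 1) * ∏ j ∈ Finset.univ.erase i, u j) *
        ∏ j ∈ Finset.univ.erase i, (u i * u j - 1) / (u i - u j))
    (ω : ℤ → F) (hω : ∀ a : ℤ, ω a = ∑ j, u j ^ a * γ j)
    (Q : ℕ → F)
    (hQ : ∀ a : ℕ, Q a = PowerSeries.coeff (R := F) a
      (∏ i, (PowerSeries.X - PowerSeries.C (R := F) (u i)) *
        (PowerSeries.C (R := F) (u i) * PowerSeries.X - 1)⁻¹)) :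
    ∀ a : ℕ,
      (Odd r → ω (a : ℤ) =
        (if Even a then 1 else 0) + (q - q⁻¹)⁻¹ * ϱ * Q a * (∏ l, u l) +
          (∑ k ∈ Finset.range a, (if Even k then (1 : F) else 0) * Q (a - 1 - k)) -
          (if a = 0 then (q - q⁻¹)⁻¹ * ϱ else 0)) ∧
      (Even r → ω (a : ℤ) =
        (if Even a then 1 else 0) + (q - q⁻¹)⁻¹ * ϱ * Q a * (∏ l, u l) -
          (∑ k ∈ Finset.range (a + 1), (if Even k then (1 : F) else 0) * Q (a - k)) -
          (if a = 0 then (q - q⁻¹)⁻¹ * ϱ else 0)) := by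
  classical
  intro a
  have hk := St5.key4 hr u ((q - q⁻¹)⁻¹ * ϱ) hu0 huinj hu1 γ hγ
  have hc := congrArg (PowerSeries.coeff (R := F) a) hk
  have hEf : ∀ m : ℕ, PowerSeries.coeff (R := F) m
      (PowerSeries.mk (fun n => if Even n then (1 : F) else 0) *
        ∏ i, (PowerSeries.X - PowerSeries.C (R := F) (u i)) *
          (PowerSeries.C (R := F) (u i) * PowerSeries.X - 1)⁻¹) =
      ∑ k ∈ Finset.range (m + 1), (if Even k then (1 : F) else 0) * Q (m - k) := by
    intro m
    rw [PowerSeries.coeff_mul, Finset.Nat.sum_antidiagonal_eq_sum_range_succ_mk]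
    exact Finset.sum_congr rfl fun k _ => by rw [PowerSeries.coeff_mk, hQ]
  have hωa : ω (a : ℤ) = ∑ x, γ x * u x ^ a := by
    rw [hω]
    exact Finset.sum_congr rfl fun j _ => by rw [zpow_natCast, mul_comm]
  constructor
  · intro hodd
    rw [if_pos hodd, map_add, map_add] at hc
    cases a with
    | zero =>
      rw [PowerSeries.coeff_zero_X_mul] at hc
      simp only [map_add, PowerSeries.coeff_C_mul, map_sub, PowerSeries.coeff_one,
        PowerSeries.coeff_mk, map_sum, ← hQ] at hc
      rw [hωa]
      simp only [Even.zero, if_true, reduceIte, Finset.range_zero, Finset.sum_empty, pow_zero,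
        mul_one, add_zero] at hc ⊢
      linear_combination hc
    | succ n =>
      rw [PowerSeries.coeff_succ_X_mul, hEf n] at hc
      simp only [map_add, PowerSeries.coeff_C_mul, map_sub, PowerSeries.coeff_one,
        PowerSeries.coeff_mk, map_sum, ← hQ] at hc
      rw [hωa]
      have hns : n + 1 ≠ 0 := Nat.succ_ne_zero n
      rw [if_neg hns]
      have hsum : (∑ k ∈ Finset.range (n + 1), (if Even k then (1 : F) else 0) *
          Q (n + 1 - 1 - k)) = ∑ k ∈ Finset.range (n + 1), (if Even k then (1 : F) else 0) *
          Q (n - k) := by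
        rfl
      rw [hsum]
      rw [if_neg hns] at hc
      linear_combination hc
  · intro heven
    rw [if_neg (Nat.not_odd_iff_even.mpr heven), map_add, map_add] at hc
    rw [map_neg, hEf a] at hc
    simp only [map_add, PowerSeries.coeff_C_mul, map_sub, PowerSeries.coeff_one,
      PowerSeries.coeff_mk, map_sum, ← hQ] at hc
    rw [hωa]
    by_cases ha : a = 0
    · subst ha
      rw [if_pos rfl] at hc ⊢
      linear_combination hc
    · rw [if_neg ha] at hc ⊢
      linear_combination hc
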